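/- arXiv:math/0608159 — 4 statements merged into one kernel-verified Lean document; each statement's English description precedes it below -/
import Mathlib

section
/- Let (R_m) be a strictly increasing sequence of natural numbers, a(j) = ρ_m if j = R_m for some m and a(j) = 1 otherwise, and b ≡ 0, where ρ_m > 1 for all m. Let (β_m) be a sequence with β_m ≥ ρ_m and β_m → ∞, and set A_m = ∏_{l=1}^m β_l². If for some ε > 0, limsup_{m→∞} (R_{m+1} − R_m)/A_m^{1+ε} > 0, then for every E ∈ (−2,2) the only square-summable solution of the eigenvalue equation at E is the zero solution (in particular, no E ∈ (−2,2) is an eigenvalue of the Jacobi matrix J(a,b), so its spectral measures are continuous on (−2,2)). -/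
open MeasureTheory Filter
open scoped ENNReal

lemma key_quad (E v w : ℝ) : E * v * w ≤ |E| * (v^2 + w^2) / 2 := by
  have h1 : E * v * w ≤ |E * v * w| := le_abs_self _
  have h2 : |E * v * w| = |E| * |v| * |w| := by rw [abs_mul, abs_mul]
  nlinarith [sq_nonneg (|v| - |w|), sq_abs v, sq_abs w, abs_nonneg E, abs_nonneg v, abs_nonneg w]

lemma key_quad' (E v w : ℝ) : -(E * v * w) ≤ |E| * (v^2 + w^2) / 2 := by
  have := key_quad (-E) v w
  rw [abs_neg] at this; linarith


lemma one_le_prod_real {s : Finset ℕ} {f : ℕ → ℝ} (h : ∀ i ∈ s, 1 ≤ f i) :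
    1 ≤ ∏ i ∈ s, f i := by
  calc (1:ℝ) = ∏ i ∈ s, 1 := by simp
    _ ≤ ∏ i ∈ s, f i := Finset.prod_le_prod (by simp) h

lemma prod_le_prod_subset_real {s t : Finset ℕ} {f : ℕ → ℝ} (hst : s ⊆ t)
    (h1 : ∀ i ∈ t, 1 ≤ f i) : ∏ i ∈ s, f i ≤ ∏ i ∈ t, f i := by
  rw [← Finset.prod_sdiff hst]
  have h2 : 1 ≤ ∏ i ∈ t \ s, f i := one_le_prod_real (fun i hi => h1 i (Finset.sdiff_subset hi))
  have h3 : 0 ≤ ∏ i ∈ s, f i :=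
    le_trans zero_le_one (one_le_prod_real (fun i hi => h1 i (hst hi)))
  nlinarith

lemma prod_le_pow_card_real {s : Finset ℕ} {f : ℕ → ℝ} {K : ℝ}
    (h0 : ∀ i ∈ s, 0 ≤ f i) (h : ∀ i ∈ s, f i ≤ K) :
    ∏ i ∈ s, f i ≤ K ^ s.card := by
  calc ∏ i ∈ s, f i ≤ ∏ i ∈ s, K := Finset.prod_le_prod h0 h
    _ = K ^ s.card := Finset.prod_const K


lemma rpow_pow_comm {x : ℝ} (hx : 0 ≤ x) (n : ℕ) (e : ℝ) :
    (x ^ n) ^ e = (x ^ e) ^ n := by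
  rw [← Real.rpow_natCast x n, ← Real.rpow_mul hx, mul_comm, Real.rpow_mul hx,
    Real.rpow_natCast]

set_option maxHeartbeats 1000000 in
/-- Lemma: sufficiently sparse bumps imply no square-summable solutions in
`(-2,2)`, hence continuity of spectral measures there: with `a(j) = ρ_m > 1` at `j = R_m`
(`m ≥ 1`) and `a(j) = 1` otherwise, `b ≡ 0`, `β_m ≥ ρ_m`, `β_m → ∞`,
`A_m = ∏_{l=1}^m β_l²`, if `limsup_m (R_{m+1} - R_m)/A_m^{1+ε} > 0` for some `ε > 0`, then
for every `E ∈ (-2,2)` the only square-summable solution of the eigenvalue equation at `E`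
is the zero solution. -/
theorem no_eigenvalues_of_sparse_bumps
    (R : ℕ → ℕ) (hmono : StrictMono R) (hR1 : ∀ m, 1 ≤ m → 1 ≤ R m)
    (ρ β : ℕ → ℝ)
    (hρ : ∀ m, 1 ≤ m → 1 < ρ m)
    (hβρ : ∀ m, 1 ≤ m → ρ m ≤ β m)
    (hβtop : Tendsto β atTop atTop)
    (A : ℕ → ℝ) (hA : ∀ m, A m = ∏ l ∈ Finset.Icc 1 m, (β l) ^ 2)
    (ε : ℝ) (hε : 0 < ε)
    -- limsup_m (R_{m+1} - R_m) / A_m^{1+ε} > 0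
    (hlimsup : ∃ c : ℝ, 0 < c ∧
      ∃ᶠ m in atTop, c ≤ ((R (m + 1) : ℝ) - (R m : ℝ)) / (A m) ^ (1 + ε))
    (a : ℕ → ℝ) (ha0 : a 0 = 1)
    (haR : ∀ m, 1 ≤ m → a (R m) = ρ m)
    (ha1 : ∀ j, (∀ m, 1 ≤ m → R m ≠ j) → a j = 1)
    (E : ℝ) (hE : E ∈ Set.Ioo (-2 : ℝ) 2)
    (u : ℕ → ℝ)
    -- u solves the eigenvalue equation (b ≡ 0) at E
    (hsol : ∀ j : ℕ, 1 ≤ j → a j * u (j + 1) + a (j - 1) * u (j - 1) = E * u j)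
    -- u is square-summable
    (hsq : Summable fun j : ℕ => u (j + 1) ^ 2) :
    ∀ j, u j = 0 := by
  obtain ⟨c, hc, hfreq⟩ := hlimsup
  have hEabs : |E| < 2 := abs_lt.2 ⟨hE.1, hE.2⟩
  have hEabs0 : 0 ≤ |E| := abs_nonneg E
  set δ := 1 - |E| / 2 with hδdef
  have hδpos : 0 < δ := by simp only [hδdef]; linarith
  have hδ1 : δ ≤ 1 := by simp only [hδdef]; linarith
  set K := 18 / δ with hKdef
  have hK1 : 1 ≤ K := by
    rw [hKdef, le_div_iff₀ hδpos]; linarith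
  have hK0 : 0 < K := lt_of_lt_of_le one_pos hK1
  -- a j ≥ 1
  have hage : ∀ j, 1 ≤ a j := by
    intro j
    by_cases h : ∃ m, 1 ≤ m ∧ R m = j
    · obtain ⟨m, hm, rfl⟩ := h
      rw [haR m hm]; exact (hρ m hm).le
    · push_neg at h
      rw [ha1 j h]
  -- the conserved-ish quadratic form
    -- q j built from u j, u (j+1)
  set q : ℕ → ℝ := fun j => u j ^ 2 + u (j+1) ^ 2 - E * u j * u (j+1) with hqdef
  have hqlow : ∀ j, δ * (u j ^ 2 + u (j+1) ^ 2) ≤ q j := by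
    intro j
    have := key_quad E (u j) (u (j+1))
    simp only [hqdef, hδdef]
    nlinarith [sq_nonneg (u j), sq_nonneg (u (j+1))]
  have hqup : ∀ j, q j ≤ 2 * (u j ^ 2 + u (j+1) ^ 2) := by
    intro j
    have := key_quad' E (u j) (u (j+1))
    simp only [hqdef]
    nlinarith [sq_nonneg (u j), sq_nonneg (u (j+1))]
  have hqnn : ∀ j, 0 ≤ q j := by
    intro j
    refine le_trans ?_ (hqlow j)
    positivity
  -- step inequality
  set C : ℕ → ℝ := fun j => if a j = 1 ∧ a (j-1) = 1 then 1 else K * a j ^ 2 with hCdef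

  have hC1 : ∀ j, 1 ≤ C j := by
    intro j
    simp only [hCdef]
    split
    · exact le_refl 1
    · nlinarith [hage j, hK1]
  have hC0 : ∀ j, 0 < C j := fun j => lt_of_lt_of_le one_pos (hC1 j)
  have hstep : ∀ i : ℕ, q i ≤ C (i+1) * q (i+1) := by
    intro i
    have heq := hsol (i+1) (Nat.le_add_left 1 i)
    simp only [Nat.add_sub_cancel] at heq
    simp only [hCdef, Nat.add_sub_cancel]
    split
    · next h =>
      obtain ⟨h1, h2⟩ := h
      rw [h1, h2] at heq
      have hq : q i = q (i+1) := by
        simp only [hqdef]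
        linear_combination (u i - u (i+1+1)) * heq
      rw [hq]; linarith [hqnn (i+1)]
    · -- general bump estimate
      have hai : 1 ≤ a i := hage i
      have hai1 : 1 ≤ a (i+1) := hage (i+1)
      have hAi2 : 1 ≤ a i ^ 2 := by nlinarith
      have hA2 : 1 ≤ a (i+1) ^ 2 := by nlinarith
      have h1 : u i ^ 2 ≤ (a i * u i) ^ 2 := by
        nlinarith [mul_nonneg (sub_nonneg.2 hAi2) (sq_nonneg (u i))]
      have h2 : (a i * u i) ^ 2 = (E * u (i+1) - a (i+1) * u (i+1+1)) ^ 2 := by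
        have he : a i * u i = E * u (i+1) - a (i+1) * u (i+1+1) := by linarith [heq]
        rw [he]
      have h3 : (E * u (i+1) - a (i+1) * u (i+1+1)) ^ 2
          ≤ 2 * E ^ 2 * u (i+1) ^ 2 + 2 * a (i+1) ^ 2 * u (i+1+1) ^ 2 := by
        nlinarith [sq_nonneg (E * u (i+1) + a (i+1) * u (i+1+1))]
      have hE2 : E ^ 2 ≤ 4 := by nlinarith [hE.1, hE.2]
      have hup : q i ≤ 2 * (u i ^ 2 + u (i+1) ^ 2) := hqup i
      have hlow : δ * (u (i+1) ^ 2 + u (i+1+1) ^ 2) ≤ q (i+1) := hqlow (i+1)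
      have p1 : 0 ≤ (a (i+1) ^ 2 - 1) * u (i+1) ^ 2 :=
        mul_nonneg (by linarith) (sq_nonneg _)
      have p2 : 0 ≤ (a (i+1) ^ 2 - 1) * u (i+1+1) ^ 2 :=
        mul_nonneg (by linarith) (sq_nonneg _)
      have p3 : 0 ≤ (4 - E ^ 2) * u (i+1) ^ 2 :=
        mul_nonneg (by linarith) (sq_nonneg _)
      have key : q i ≤ 18 * a (i+1) ^ 2 * (u (i+1) ^ 2 + u (i+1+1) ^ 2) := by
        nlinarith [p1, p2, p3, h1, h2, h3, hup]
      have hKδ : K * δ = 18 := by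
        rw [hKdef]; field_simp
      have h5 : K * a (i+1) ^ 2 * (δ * (u (i+1) ^ 2 + u (i+1+1) ^ 2))
          ≤ K * a (i+1) ^ 2 * q (i+1) :=
        mul_le_mul_of_nonneg_left hlow (by positivity)
      have h6 : K * a (i+1) ^ 2 * (δ * (u (i+1) ^ 2 + u (i+1+1) ^ 2))
          = 18 * a (i+1) ^ 2 * (u (i+1) ^ 2 + u (i+1+1) ^ 2) := by
        calc K * a (i+1) ^ 2 * (δ * (u (i+1) ^ 2 + u (i+1+1) ^ 2))
            = (K * δ) * (a (i+1) ^ 2 * (u (i+1) ^ 2 + u (i+1+1) ^ 2)) := by ring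
          _ = 18 * a (i+1) ^ 2 * (u (i+1) ^ 2 + u (i+1+1) ^ 2) := by rw [hKδ]; ring
      linarith
  set P : ℕ → ℝ := fun n => ∏ j ∈ Finset.Icc 1 n, C j with hPdef
  have hP1 : ∀ n, 1 ≤ P n := by
    intro n
    exact one_le_prod_real (fun j _ => hC1 j)
  have hP0 : ∀ n, 0 < P n := fun n => lt_of_lt_of_le one_pos (hP1 n)
  have hchain : ∀ n, q 0 ≤ P n * q n := by
    intro n
    induction n with
    | zero => simp [hPdef]
    | succ n ih =>
      have h1 : P (n+1) = P n * C (n+1) := by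
        simp only [hPdef]
        exact Finset.prod_Icc_succ_top (Nat.le_add_left 1 n) C
      have h2 : P n * q n ≤ P n * (C (n+1) * q (n+1)) :=
        mul_le_mul_of_nonneg_left (hstep n) (hP0 n).le
      rw [h1]
      calc q 0 ≤ P n * q n := ih
        _ ≤ P n * (C (n+1) * q (n+1)) := h2
        _ = P n * C (n+1) * q (n+1) := by ring
  -- bound on P n inside a gap
  have hA1 : ∀ m, 1 ≤ A m := by
    intro m
    rw [hA m]
    refine one_le_prod_real (fun l hl => ?_)
    have hl1 : 1 ≤ l := (Finset.mem_Icc.1 hl).1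
    nlinarith [hρ l hl1, hβρ l hl1]
  have hA0 : ∀ m, 0 < A m := fun m => lt_of_lt_of_le one_pos (hA1 m)
  have hPbound : ∀ m n : ℕ, n < R (m+1) → P n ≤ K ^ (2*m) * A m := by
    intro m n hn
    classical
    set T : Finset ℕ := (Finset.Icc 1 m).image R with hTdef
    -- if j ≤ n and j not a bump index ≤ m, then a j = 1
    have hnotT : ∀ j, j ≤ n → j ∉ T → a j = 1 := by
      intro j hj hjT
      apply ha1
      intro l hl hRl
      apply hjT
      rw [hTdef]
      refine Finset.mem_image.2 ⟨l, Finset.mem_Icc.2 ⟨hl, ?_⟩, hRl⟩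
      by_contra hlm
      push_neg at hlm
      have : R (m+1) ≤ R l := hmono.monotone hlm
      omega
    set f : ℕ → ℝ := fun j => if a j = 1 ∧ a (j-1) = 1 then 1 else K with hfdef
    have hCf : ∀ j, C j = f j * a j ^ 2 := by
      intro j
      simp only [hCdef, hfdef]
      split
      · next h => rw [h.1]; ring
      · ring
    have hsplit : P n = (∏ j ∈ Finset.Icc 1 n, f j) * ∏ j ∈ Finset.Icc 1 n, a j ^ 2 := by
      simp only [hPdef]
      rw [← Finset.prod_mul_distrib]
      exact Finset.prod_congr rfl (fun j _ => hCf j)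
    -- bound the a-product
    have hbound2 : ∏ j ∈ Finset.Icc 1 n, a j ^ 2 ≤ A m := by
      have e1 : ∏ j ∈ Finset.Icc 1 n ∩ T, a j ^ 2 = ∏ j ∈ Finset.Icc 1 n, a j ^ 2 := by
        apply Finset.prod_subset (Finset.inter_subset_left)
        intro j hj hjn
        have hjT : j ∉ T := fun h => hjn (Finset.mem_inter.2 ⟨hj, h⟩)
        rw [hnotT j (Finset.mem_Icc.1 hj).2 hjT]; norm_num
      rw [← e1]
      have e2 : ∏ j ∈ Finset.Icc 1 n ∩ T, a j ^ 2 ≤ ∏ j ∈ T, a j ^ 2 := by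
        apply prod_le_prod_subset_real (Finset.inter_subset_right)
        intro j _
        nlinarith [hage j]
      refine le_trans e2 ?_
      have e3 : ∏ j ∈ T, a j ^ 2 = ∏ l ∈ Finset.Icc 1 m, a (R l) ^ 2 := by
        rw [hTdef]
        exact Finset.prod_image (fun x _ y _ h => hmono.injective h)
      rw [e3, hA m]
      apply Finset.prod_le_prod
      · intro l hl
        positivity
      · intro l hl
        have hl1 : 1 ≤ l := (Finset.mem_Icc.1 hl).1
        rw [haR l hl1]
        have := hρ l hl1
        have := hβρ l hl1
        nlinarith
    -- bound the f-product
    have hbound1 : ∏ j ∈ Finset.Icc 1 n, f j ≤ K ^ (2*m) := by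
      set T' : Finset ℕ := T ∪ T.image (· + 1) with hT'def
      have e1 : ∏ j ∈ Finset.Icc 1 n ∩ T', f j = ∏ j ∈ Finset.Icc 1 n, f j := by
        apply Finset.prod_subset (Finset.inter_subset_left)
        intro j hj hjn
        have hjT' : j ∉ T' := fun h => hjn (Finset.mem_inter.2 ⟨hj, h⟩)
        obtain ⟨hj1, hj2⟩ := Finset.mem_Icc.1 hj
        have hja : a j = 1 := by
          apply hnotT j hj2
          intro h
          exact hjT' (Finset.mem_union_left _ h)
        have hja' : a (j-1) = 1 := by
          apply ha1
          intro l hl hRl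
          apply hjT'
          apply Finset.mem_union_right
          refine Finset.mem_image.2 ⟨j - 1, ?_, by omega⟩
          rw [hTdef]
          refine Finset.mem_image.2 ⟨l, Finset.mem_Icc.2 ⟨hl, ?_⟩, hRl⟩
          by_contra hlm
          push_neg at hlm
          have : R (m+1) ≤ R l := hmono.monotone hlm
          omega
        simp only [hfdef]
        rw [if_pos ⟨hja, hja'⟩]
      rw [← e1]
      have e2 : ∏ j ∈ Finset.Icc 1 n ∩ T', f j ≤ K ^ (Finset.Icc 1 n ∩ T').card := by
        apply prod_le_pow_card_real
        · intro j _
          simp only [hfdef]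
          split
          · norm_num
          · exact hK0.le
        · intro j _
          simp only [hfdef]
          split
          · exact hK1
          · exact le_refl K
      refine le_trans e2 ?_
      apply pow_le_pow_right₀ hK1
      calc (Finset.Icc 1 n ∩ T').card ≤ T'.card :=
            Finset.card_le_card (Finset.inter_subset_right)
        _ ≤ T.card + (T.image (· + 1)).card := Finset.card_union_le _ _
        _ ≤ T.card + T.card := by
            have := Finset.card_image_le (s := T) (f := (· + 1))
            omega
        _ ≤ 2 * m := by
            have h1 : T.card ≤ m := by
              rw [hTdef]
              calc ((Finset.Icc 1 m).image R).card ≤ (Finset.Icc 1 m).card :=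
                    Finset.card_image_le
                _ = m := by rw [Nat.card_Icc]; omega
            omega
    rw [hsplit]
    have h1 : (0:ℝ) ≤ ∏ j ∈ Finset.Icc 1 n, a j ^ 2 :=
      Finset.prod_nonneg (fun j _ => sq_nonneg _)
    exact mul_le_mul hbound1 hbound2 h1 (by positivity)
  set Tsum : ℝ := ∑' j, u (j+1) ^ 2 with hTsumdef
  have hTnn : 0 ≤ Tsum := tsum_nonneg (fun j => sq_nonneg _)
  have hpartial : ∀ s : Finset ℕ, (∀ n ∈ s, 1 ≤ n) → ∑ n ∈ s, u n ^ 2 ≤ Tsum := by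
    intro s hs
    have hinj : ∀ x ∈ s, ∀ y ∈ s, x - 1 = y - 1 → x = y := by
      intro x hx y hy h
      have := hs x hx; have := hs y hy; omega
    have h1 : ∑ k ∈ s.image (· - 1), u (k+1) ^ 2 = ∑ n ∈ s, u n ^ 2 := by
      rw [Finset.sum_image hinj]
      apply Finset.sum_congr rfl
      intro n hn
      have he : n - 1 + 1 = n := by have := hs n hn; omega
      rw [he]
    rw [← h1]
    exact Summable.sum_le_tsum _ (fun k _ => sq_nonneg _) hsq
  have hmain : ∀ m : ℕ, 1 ≤ m → c ≤ ((R (m+1) : ℝ) - R m) / A m ^ (1+ε) →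
      c * (A m ^ ε * q 0) ≤ 4 * Tsum * K ^ (2*m) := by
    intro m hm hcm
    set s : Finset ℕ := Finset.Ico (R m) (R (m+1)) with hsdef
    have hRle : R m ≤ R (m+1) := (hmono (Nat.lt_succ_self m)).le
    have hcard : (s.card : ℝ) = (R (m+1) : ℝ) - R m := by
      simp only [hsdef, Nat.card_Ico]
      exact Nat.cast_sub hRle
    have hsum1 : (s.card : ℝ) * q 0 ≤ (K ^ (2*m) * A m) * ∑ n ∈ s, q n := by
      calc (s.card : ℝ) * q 0 = ∑ _n ∈ s, q 0 := by rw [Finset.sum_const, nsmul_eq_mul]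
        _ ≤ ∑ n ∈ s, (K ^ (2*m) * A m) * q n := by
            apply Finset.sum_le_sum
            intro n hn
            obtain ⟨hn1, hn2⟩ := Finset.mem_Ico.1 hn
            calc q 0 ≤ P n * q n := hchain n
              _ ≤ (K ^ (2*m) * A m) * q n :=
                  mul_le_mul_of_nonneg_right (hPbound m n hn2) (hqnn n)
        _ = (K ^ (2*m) * A m) * ∑ n ∈ s, q n := by rw [Finset.mul_sum]
    have hsumq : ∑ n ∈ s, q n ≤ 4 * Tsum := by
      have h1 : ∑ n ∈ s, q n ≤ ∑ n ∈ s, 2 * (u n ^ 2 + u (n+1) ^ 2) :=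
        Finset.sum_le_sum (fun n _ => hqup n)
      have h2 : ∑ n ∈ s, 2 * (u n ^ 2 + u (n+1) ^ 2)
          = 2 * ∑ n ∈ s, u n ^ 2 + 2 * ∑ n ∈ s, u (n+1) ^ 2 := by
        simp only [mul_add]
        rw [Finset.sum_add_distrib, ← Finset.mul_sum, ← Finset.mul_sum]
      have h3 : ∑ n ∈ s, u n ^ 2 ≤ Tsum := by
        apply hpartial
        intro n hn
        exact le_trans (hR1 m hm) (Finset.mem_Ico.1 hn).1
      have h4 : ∑ n ∈ s, u (n+1) ^ 2 ≤ Tsum := by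
        have himg : ∑ k ∈ s.image (· + 1), u k ^ 2 = ∑ n ∈ s, u (n+1) ^ 2 :=
          Finset.sum_image (by intro x _ y _ h; simp only at h; omega)
        rw [← himg]
        apply hpartial
        intro k hk
        obtain ⟨n, hn, rfl⟩ := Finset.mem_image.1 hk
        omega
      linarith
    have hApow : A m ^ (1+ε) = A m * A m ^ ε := by
      rw [Real.rpow_add (hA0 m), Real.rpow_one]
    have hgap : c * (A m * A m ^ ε) ≤ (R (m+1) : ℝ) - R m := by
      have hpos : 0 < A m ^ (1+ε) := Real.rpow_pos_of_pos (hA0 m) _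
      have h := (le_div_iff₀ hpos).1 hcm
      rw [hApow] at h
      linarith
    have h5 : c * (A m * A m ^ ε) * q 0 ≤ (K ^ (2*m) * A m) * (4 * Tsum) := by
      calc c * (A m * A m ^ ε) * q 0 ≤ ((R (m+1) : ℝ) - R m) * q 0 :=
            mul_le_mul_of_nonneg_right hgap (hqnn 0)
        _ = (s.card : ℝ) * q 0 := by rw [hcard]
        _ ≤ (K ^ (2*m) * A m) * ∑ n ∈ s, q n := hsum1
        _ ≤ (K ^ (2*m) * A m) * (4 * Tsum) :=
            mul_le_mul_of_nonneg_left hsumq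
              (mul_nonneg (pow_nonneg hK0.le _) (hA0 m).le)
    have h6 : (c * (A m ^ ε * q 0)) * A m ≤ (4 * Tsum * K ^ (2*m)) * A m := by
      have e1 : (c * (A m ^ ε * q 0)) * A m = c * (A m * A m ^ ε) * q 0 := by ring
      have e2 : (4 * Tsum * K ^ (2*m)) * A m = (K ^ (2*m) * A m) * (4 * Tsum) := by ring
      rw [e1, e2]; exact h5
    exact le_of_mul_le_mul_right h6 (hA0 m)
  -- q 0 must vanish
  have hq00 : q 0 = 0 := by
    by_contra hq0ne
    have hq0pos : 0 < q 0 := lt_of_le_of_ne (hqnn 0) (Ne.symm hq0ne)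
    set G : ℝ := (2 * K ^ 2) ^ (1/ε : ℝ) with hGdef
    have h2K : (0:ℝ) < 2 * K ^ 2 := by positivity
    have hGpos : 0 < G := Real.rpow_pos_of_pos h2K _
    have hGε : G ^ ε = 2 * K ^ 2 := by
      rw [hGdef, ← Real.rpow_mul h2K.le]
      rw [one_div, inv_mul_cancel₀ (ne_of_gt hε), Real.rpow_one]
    obtain ⟨M, hM⟩ := Filter.eventually_atTop.1 (hβtop.eventually_ge_atTop (Real.sqrt G))
    set M' := max M 1 with hM'def
    have hM'1 : 1 ≤ M' := le_max_right _ _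
    have hβG : ∀ l, M' ≤ l → G ≤ β l ^ 2 := by
      intro l hl
      have h1 : Real.sqrt G ≤ β l := hM l (le_trans (le_max_left _ _) hl)
      have h2 := Real.sq_sqrt hGpos.le
      nlinarith [Real.sqrt_nonneg G]
    set P0 : ℝ := ∏ l ∈ Finset.Icc 1 (M'-1), β l ^ 2 with hP0def
    have hP0pos : 0 < P0 := by
      apply Finset.prod_pos
      intro l hl
      have hl1 : 1 ≤ l := (Finset.mem_Icc.1 hl).1
      nlinarith [hρ l hl1, hβρ l hl1]
    have hAlow : ∀ m, M' ≤ m → P0 * G ^ (m - M' + 1) ≤ A m := by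
      intro m hm
      rw [hA m]
      have e1 : Finset.Icc 1 m = Finset.Ioc 0 m := by
        rw [← Finset.Icc_add_one_left_eq_Ioc]; rfl
      have e2 : Finset.Icc 1 (M'-1) = Finset.Ioc 0 (M'-1) := by
        rw [← Finset.Icc_add_one_left_eq_Ioc]; rfl
      have e3 : (∏ l ∈ Finset.Ioc 0 (M'-1), β l ^ 2) * ∏ l ∈ Finset.Ioc (M'-1) m, β l ^ 2
          = ∏ l ∈ Finset.Ioc 0 m, β l ^ 2 :=
        Finset.prod_Ioc_consecutive _ (Nat.zero_le _) (by omega)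
      rw [e1, ← e3, ← e2, ← hP0def]
      apply mul_le_mul_of_nonneg_left _ hP0pos.le
      have hcard : (Finset.Ioc (M'-1) m).card = m - M' + 1 := by
        rw [Nat.card_Ioc]; omega
      calc G ^ (m - M' + 1) = ∏ _l ∈ Finset.Ioc (M'-1) m, G := by
            rw [Finset.prod_const, hcard]
        _ ≤ ∏ l ∈ Finset.Ioc (M'-1) m, β l ^ 2 := by
            apply Finset.prod_le_prod
            · intro l _; exact hGpos.le
            · intro l hl
              exact hβG l (by have := (Finset.mem_Ioc.1 hl).1; omega)
    set D : ℝ := c * q 0 * P0 ^ ε with hDdef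
    have hDpos : 0 < D := by
      have : (0:ℝ) < P0 ^ ε := Real.rpow_pos_of_pos hP0pos _
      positivity
    set Cst : ℝ := (2 * K ^ 2) ^ (M'-1) with hCstdef
    have hCstpos : 0 < Cst := by positivity
    have hev : ∀ᶠ m in atTop, 4 * Tsum * K ^ (2*m) < c * (A m ^ ε * q 0) := by
      have htend : Tendsto (fun m : ℕ => D * 2 ^ m) atTop atTop :=
        Tendsto.const_mul_atTop hDpos (tendsto_pow_atTop_atTop_of_one_lt one_lt_two)
      filter_upwards [htend.eventually_gt_atTop (4 * Tsum * Cst),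
        Filter.eventually_ge_atTop M'] with m h2m hmM
      -- A m ^ ε lower bound
      have hAε : P0 ^ ε * (2 * K ^ 2) ^ (m - M' + 1) ≤ A m ^ ε := by
        have h1 : (P0 * G ^ (m - M' + 1)) ^ ε ≤ A m ^ ε :=
          Real.rpow_le_rpow (by positivity) (hAlow m hmM) hε.le
        have h2 : (P0 * G ^ (m - M' + 1)) ^ ε
            = P0 ^ ε * (2 * K ^ 2) ^ (m - M' + 1) := by
          rw [Real.mul_rpow hP0pos.le (by positivity), rpow_pow_comm hGpos.le, hGε]
        rw [← h2]; exact h1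
      have hpowid : (2 * K ^ 2) ^ (m - M' + 1) * Cst = (2 * K ^ 2) ^ m := by
        rw [hCstdef, ← pow_add]
        congr 1
        omega
      -- key strict inequality after multiplying by Cst
      have hstrict : (4 * Tsum * K ^ (2*m)) * Cst < (D * (2 * K ^ 2) ^ (m - M' + 1)) * Cst := by
        have hK2m : (0:ℝ) < K ^ (2*m) := by positivity
        have h1 : (4 * Tsum * Cst) * K ^ (2*m) < (D * 2 ^ m) * K ^ (2*m) :=
          mul_lt_mul_of_pos_right h2m hK2m
        have e1 : (4 * Tsum * K ^ (2*m)) * Cst = (4 * Tsum * Cst) * K ^ (2*m) := by ring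
        have e2 : (D * (2 * K ^ 2) ^ (m - M' + 1)) * Cst = (D * 2 ^ m) * K ^ (2*m) := by
          rw [mul_assoc D, hpowid, mul_pow, pow_mul]
          ring
        rw [e1, e2]
        exact h1
      have h3 : 4 * Tsum * K ^ (2*m) < D * (2 * K ^ 2) ^ (m - M' + 1) :=
        lt_of_mul_lt_mul_right hstrict hCstpos.le
      have h4 : D * (2 * K ^ 2) ^ (m - M' + 1) ≤ c * (A m ^ ε * q 0) := by
        have := mul_le_mul_of_nonneg_left hAε (show (0:ℝ) ≤ c * q 0 by positivity)
        calc D * (2 * K ^ 2) ^ (m - M' + 1)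
            = (c * q 0) * (P0 ^ ε * (2 * K ^ 2) ^ (m - M' + 1)) := by rw [hDdef]; ring
          _ ≤ (c * q 0) * A m ^ ε := this
          _ = c * (A m ^ ε * q 0) := by ring
      linarith
    obtain ⟨m, ⟨hm1, hmc⟩, hmev⟩ :=
      ((hfreq.and_eventually (Filter.eventually_ge_atTop 1)).and_eventually hev).exists
    exact absurd (hmain m hmc hm1) (not_le.2 hmev)
  -- conclude u 0 = u 1 = 0, then all zero
  have hsum0 : u 0 ^ 2 + u (0+1) ^ 2 ≤ 0 := by
    have h := hqlow 0
    rw [hq00] at h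
    nlinarith [sq_nonneg (u 0), sq_nonneg (u (0+1))]
  have hu0 : u 0 = 0 := by
    have : u 0 ^ 2 = 0 := le_antisymm (by nlinarith [sq_nonneg (u (0+1))]) (sq_nonneg _)
    exact pow_eq_zero_iff two_ne_zero |>.1 this
  have hu1 : u 1 = 0 := by
    have : u (0+1) ^ 2 = 0 := le_antisymm (by nlinarith [sq_nonneg (u 0)]) (sq_nonneg _)
    exact pow_eq_zero_iff two_ne_zero |>.1 this
  have hall : ∀ j, u j = 0 ∧ u (j+1) = 0 := by
    intro j
    induction j with
    | zero => exact ⟨hu0, hu1⟩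
    | succ j ih =>
      refine ⟨ih.2, ?_⟩
      have heq := hsol (j+1) (Nat.le_add_left 1 j)
      simp only [Nat.add_sub_cancel] at heq
      rw [ih.1, ih.2] at heq
      simp only [mul_zero, add_zero, zero_add] at heq
      have ha' : 0 < a (j+1) := lt_of_lt_of_le one_pos (hage (j+1))
      exact (mul_eq_zero.1 heq).resolve_left (ne_of_gt ha')
  intro j
  exact (hall j).1
end

section
/- Fix a real γ > 1 and an integer k ≥ 2, and for an integer r ≥ 0 let N(r) = Σ_{j=0}^{r} k^{#{n ≥ 1 : ⌊γ^n⌋ < j}} (this is the number of vertices at distance at most r from the root in the SH rooted tree Γ_{k,γ} of type {⌊γ^n⌋, k}, whose n-th branching occurs at generation ⌊γ^n⌋). Then the limit lim_{r→∞} log(N(r))/log(r) exists and equals log(γk)/log(γ); in particular limsup and liminf of log(N(r))/log(r) coincide and equal log(γk)/log(γ). -/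
open Filter

/-- Proposition: dimension of the tree `Γ_{k,γ}`: with `N(r)` the number of
vertices at distance at most `r` from the root of the SH rooted tree with branchings of size
`k` at the generations `⌊γ^n⌋`, `n ≥ 1`, the limit of `log(N(r))/log(r)` exists and equals
`log(γk)/log(γ)`. -/
theorem dimension_of_gamma_k_tree
    (γ : ℝ) (hγ : 1 < γ) (k : ℕ) (hk : 2 ≤ k)
    (N : ℕ → ℕ)
    (hN : ∀ r : ℕ, N r = ∑ j ∈ Finset.range (r + 1),
      k ^ ({n : ℕ | 1 ≤ n ∧ Nat.floor (γ ^ n) < j}.ncard)) :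
    Tendsto (fun r : ℕ => Real.log (N r) / Real.log r) atTop
      (nhds (Real.log (γ * k) / Real.log γ)) := by
  have hγ0 : (0:ℝ) < γ := lt_trans one_pos hγ
  set Lg := Real.log γ with hLgdef
  have hLg : 0 < Lg := Real.log_pos hγ
  have hk1 : (1:ℝ) < (k:ℝ) := by exact_mod_cast lt_of_lt_of_le one_lt_two hk
  have hk0 : 0 < k := by omega
  set Lk := Real.log k with hLkdef
  have hLk : 0 < Lk := Real.log_pos hk1
  set c : ℕ → ℕ := fun j => ⌈Real.log j / Lg⌉₊ with hc
  set m : ℕ → ℕ := fun j => c j - 1 with hm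
  -- log of naturals is monotone
  have hlogmono : ∀ a b : ℕ, a ≤ b → Real.log a ≤ Real.log b := by
    intro a b hab
    rcases Nat.eq_zero_or_pos a with rfl | ha
    · simpa using Real.log_natCast_nonneg b
    · exact Real.log_le_log (by exact_mod_cast ha) (by exact_mod_cast hab)
  -- key set identification
  have hkey : ∀ j n : ℕ, (Nat.floor (γ ^ n) < j ↔ n < c j) := by
    intro j n
    rcases Nat.eq_zero_or_pos j with rfl | hj
    · simp [hc]
    · rw [Nat.floor_lt (by positivity)]
      have hjpos : (0:ℝ) < (j:ℝ) := by exact_mod_cast hj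
      rw [hc]
      simp only []
      rw [Nat.lt_ceil, lt_div_iff₀ hLg]
      rw [← Real.log_lt_log_iff (by positivity) hjpos, Real.log_pow]
  have hncard : ∀ j : ℕ, ({n : ℕ | 1 ≤ n ∧ Nat.floor (γ ^ n) < j}).ncard = m j := by
    intro j
    have hset : {n : ℕ | 1 ≤ n ∧ Nat.floor (γ ^ n) < j} = ↑(Finset.Ico 1 (c j)) := by
      ext n
      simp only [Finset.coe_Ico, Set.mem_Ico, Set.mem_setOf_eq]
      exact and_congr_right fun _ => hkey j n
    rw [hset, Set.ncard_coe_finset, Nat.card_Ico]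
  have hN' : ∀ r : ℕ, N r = ∑ j ∈ Finset.range (r + 1), k ^ m j := by
    intro r
    rw [hN r]
    exact Finset.sum_congr rfl fun j _ => by rw [hncard j]
  -- monotonicity of m
  have hmmono : Monotone m := by
    intro a b hab
    have : c a ≤ c b := Nat.ceil_le_ceil
      (div_le_div_of_nonneg_right (hlogmono a b hab) hLg.le)
    exact Nat.sub_le_sub_right this 1
  -- F1 : upper bound on m
  have hF1 : ∀ j : ℕ, (m j : ℝ) ≤ Real.log j / Lg := by
    intro j
    have ht : 0 ≤ Real.log j / Lg := div_nonneg (Real.log_natCast_nonneg j) hLg.le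
    rcases Nat.eq_zero_or_pos (c j) with h0 | h1
    · simp [hm, h0, ht]
    · have hlt : ((c j : ℕ) : ℝ) < Real.log j / Lg + 1 := Nat.ceil_lt_add_one ht
      have : (m j : ℝ) = (c j : ℝ) - 1 := by
        rw [hm]; push_cast [Nat.cast_sub h1]; ring
      rw [this]; linarith
  -- F2 : lower bound on m
  have hF2 : ∀ j : ℕ, 2 ≤ j → Real.log j / Lg - 1 ≤ (m j : ℝ) := by
    intro j hj
    have hlj : 0 < Real.log j := Real.log_pos (by exact_mod_cast lt_of_lt_of_le one_lt_two hj)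
    have ht : 0 < Real.log j / Lg := div_pos hlj hLg
    have h1 : 1 ≤ c j := by
      rw [hc]; exact Nat.one_le_iff_ne_zero.mpr (by positivity)
    have hle : Real.log j / Lg ≤ (c j : ℝ) := Nat.le_ceil _
    have : (m j : ℝ) = (c j : ℝ) - 1 := by
      rw [hm]; push_cast [Nat.cast_sub h1]; ring
    rw [this]; linarith
  -- rewrite the limit value
  have hL : Real.log (γ * k) / Lg = 1 + Lk / Lg := by
    rw [Real.log_mul (ne_of_gt hγ0) (by positivity), add_div, div_self hLg.ne']
  rw [hL]
  set L : ℝ := 1 + Lk / Lg with hLdef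
  set C : ℝ := Real.log 3 * (1 + Lk / Lg) + Lk with hCdef
  have hlog3 : 0 < Real.log 3 := Real.log_pos (by norm_num)
  have hC2 : Real.log 2 ≤ C := by
    have h23 : Real.log 2 ≤ Real.log 3 := Real.log_le_log (by norm_num) (by norm_num)
    have hx : 0 < Lk / Lg := div_pos hLk hLg
    rw [hCdef]
    nlinarith [mul_pos hlog3 hx]
  -- the basic tendsto of 1/log r
  have h0 : Tendsto (fun r : ℕ => (Real.log r)⁻¹) atTop (nhds 0) :=
    tendsto_inv_atTop_zero.comp (Real.tendsto_log_atTop.comp tendsto_natCast_atTop_atTop)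
  clear_value L C
  have h0' : Tendsto (fun r : ℕ => C * (Real.log r)⁻¹) atTop (nhds 0) := by
    simpa using h0.const_mul C
  have hconst : Tendsto (fun _ : ℕ => L) atTop (nhds L) := tendsto_const_nhds
  have hlo : Tendsto (fun r : ℕ => L - C * (Real.log r)⁻¹) atTop (nhds L) := by
    simpa using hconst.sub h0'
  have hhi : Tendsto (fun r : ℕ => L + C * (Real.log r)⁻¹) atTop (nhds L) := by
    simpa using hconst.add h0'
  apply tendsto_of_tendsto_of_tendsto_of_le_of_le' hlo hhi
  · -- lower bound
    filter_upwards [eventually_ge_atTop 9] with r hr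
    have hr1 : (1:ℝ) < (r:ℝ) := by exact_mod_cast (by omega : 1 < r)
    have hlr : 0 < Real.log r := Real.log_pos hr1
    -- N r ≥ (r+1 - r/2) * k ^ m (r/2)
    have h2 : (r + 1 - r / 2) * k ^ m (r / 2) ≤ N r := by
      rw [hN' r]
      have hsub : Finset.Icc (r / 2) r ⊆ Finset.range (r + 1) := by
        intro j hj
        simp only [Finset.mem_Icc] at hj
        simp only [Finset.mem_range]
        omega
      calc (r + 1 - r / 2) * k ^ m (r / 2)
          = (Finset.Icc (r / 2) r).card • k ^ m (r / 2) := by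
            rw [Nat.card_Icc, smul_eq_mul]
        _ ≤ ∑ j ∈ Finset.Icc (r / 2) r, k ^ m j := by
            apply Finset.card_nsmul_le_sum
            intro j hj
            simp only [Finset.mem_Icc] at hj
            exact Nat.pow_le_pow_right hk0 (hmmono hj.1)
        _ ≤ ∑ j ∈ Finset.range (r + 1), k ^ m j :=
            Finset.sum_le_sum_of_subset hsub
    have hNpos : 0 < N r := by
      refine lt_of_lt_of_le ?_ h2
      exact Nat.mul_pos (by omega) (Nat.pow_pos hk0)
    -- real-number bounds
    have hcast2 : ((r + 1 - r / 2 : ℕ) : ℝ) = (r : ℝ) + 1 - ((r / 2 : ℕ) : ℝ) := by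
      push_cast [Nat.cast_sub (by omega : r / 2 ≤ r + 1)]; ring
    have hj3 : (r : ℝ) / 3 ≤ ((r / 2 : ℕ) : ℝ) := by
      have h : r ≤ 2 * (r / 2) + 1 := by omega
      have h' : (r : ℝ) ≤ 2 * ((r / 2 : ℕ) : ℝ) + 1 := by exact_mod_cast h
      have hr3 : (3:ℝ) ≤ (r:ℝ) := by exact_mod_cast (by omega : 3 ≤ r)
      linarith
    have hc3 : (r : ℝ) / 3 ≤ ((r + 1 - r / 2 : ℕ) : ℝ) := by
      rw [hcast2]
      have h : ((r / 2 : ℕ) : ℝ) ≤ (r : ℝ) / 2 := by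
        have := Nat.div_mul_le_self r 2
        have h' : ((r / 2 : ℕ) : ℝ) * 2 ≤ (r : ℝ) := by exact_mod_cast this
        linarith
      have hr0 : (0:ℝ) ≤ (r:ℝ) := by positivity
      linarith
    have hr3pos : (0:ℝ) < (r:ℝ) / 3 := by linarith
    have hlogr3 : Real.log ((r:ℝ) / 3) = Real.log r - Real.log 3 :=
      Real.log_div (by linarith) (by norm_num)
    -- log of the product lower bound
    have hlogN : Real.log ((r:ℝ)/3) + (m (r/2) : ℝ) * Lk ≤ Real.log (N r) := by
      have hle : ((r + 1 - r / 2) * k ^ m (r / 2) : ℕ) ≤ (N r : ℕ) := h2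
      have hposn : (0:ℝ) < (((r + 1 - r / 2) * k ^ m (r / 2) : ℕ) : ℝ) := by
        exact_mod_cast Nat.mul_pos (by omega : 0 < r + 1 - r / 2) (Nat.pow_pos hk0)
      have hlogle : Real.log (((r + 1 - r / 2) * k ^ m (r / 2) : ℕ) : ℝ) ≤ Real.log (N r) :=
        Real.log_le_log hposn (by exact_mod_cast hle)
      have heq : Real.log (((r + 1 - r / 2) * k ^ m (r / 2) : ℕ) : ℝ)
          = Real.log ((r + 1 - r / 2 : ℕ) : ℝ) + (m (r/2) : ℝ) * Lk := by
        push_cast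
        rw [Real.log_mul (by exact_mod_cast (by omega : (0:ℕ) ≠ r + 1 - r / 2).symm) (by positivity),
          Real.log_pow]
      have hmono2 : Real.log ((r:ℝ)/3) ≤ Real.log ((r + 1 - r / 2 : ℕ) : ℝ) :=
        Real.log_le_log hr3pos hc3
      linarith [heq ▸ hlogle]
    have hm2 : (Real.log r - Real.log 3) / Lg - 1 ≤ (m (r/2) : ℝ) := by
      have h2le : 2 ≤ r / 2 := by omega
      have := hF2 (r/2) h2le
      have hlog2 : Real.log ((r:ℝ)/3) ≤ Real.log ((r/2 : ℕ) : ℝ) :=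
        Real.log_le_log hr3pos hj3
      rw [hlogr3] at hlog2
      have hdiv : (Real.log r - Real.log 3) / Lg ≤ Real.log ((r/2:ℕ):ℝ) / Lg :=
        div_le_div_of_nonneg_right hlog2 hLg.le
      linarith
    -- combine
    have hfinal : L * Real.log r - C ≤ Real.log (N r) := by
      have hmul : ((Real.log r - Real.log 3) / Lg - 1) * Lk ≤ (m (r/2) : ℝ) * Lk :=
        mul_le_mul_of_nonneg_right hm2 hLk.le
      have hexp : (Real.log r - Real.log 3) + ((Real.log r - Real.log 3) / Lg - 1) * Lk
          = L * Real.log r - C := by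
        rw [hLdef, hCdef]; field_simp; ring
      rw [← hexp]
      rw [hlogr3] at hlogN
      linarith
    rw [le_div_iff₀ hlr]
    have : (L - C * (Real.log r)⁻¹) * Real.log r = L * Real.log r - C := by
      field_simp
    linarith [this ▸ hfinal]
  · -- upper bound
    filter_upwards [eventually_ge_atTop 9] with r hr
    have hr1 : (1:ℝ) < (r:ℝ) := by exact_mod_cast (by omega : 1 < r)
    have hlr : 0 < Real.log r := Real.log_pos hr1
    have h1 : N r ≤ (r + 1) * k ^ m r := by
      rw [hN' r]
      calc ∑ j ∈ Finset.range (r + 1), k ^ m j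
          ≤ (Finset.range (r + 1)).card • k ^ m r := by
            apply Finset.sum_le_card_nsmul
            intro j hj
            simp only [Finset.mem_range] at hj
            exact Nat.pow_le_pow_right hk0 (hmmono (by omega : j ≤ r))
        _ = (r + 1) * k ^ m r := by rw [Finset.card_range, smul_eq_mul]
    have hNpos : 0 < N r := by
      rw [hN' r]
      apply Finset.sum_pos
      · intro j _; exact Nat.pow_pos hk0
      · exact Finset.nonempty_range_iff.mpr (by omega)
    have hlogN : Real.log (N r) ≤ Real.log ((r:ℝ) + 1) + (m r : ℝ) * Lk := by
      have hlogle : Real.log (N r) ≤ Real.log (((r + 1) * k ^ m r : ℕ) : ℝ) :=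
        Real.log_le_log (by exact_mod_cast hNpos) (by exact_mod_cast h1)
      have heq : Real.log (((r + 1) * k ^ m r : ℕ) : ℝ)
          = Real.log ((r:ℝ) + 1) + (m r : ℝ) * Lk := by
        push_cast
        rw [Real.log_mul (by positivity) (by positivity), Real.log_pow]
      linarith [heq ▸ hlogle]
    have hlog_r1 : Real.log ((r:ℝ) + 1) ≤ Real.log 2 + Real.log r := by
      have h2r : (r:ℝ) + 1 ≤ 2 * r := by linarith
      have := Real.log_le_log (by linarith : (0:ℝ) < (r:ℝ) + 1) h2r
      rwa [Real.log_mul (by norm_num) (by linarith)] at this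
    have hmr : (m r : ℝ) * Lk ≤ Real.log r / Lg * Lk :=
      mul_le_mul_of_nonneg_right (hF1 r) hLk.le
    have hfinal : Real.log (N r) ≤ L * Real.log r + C := by
      have hexp : Real.log r + Real.log 2 + Real.log r / Lg * Lk
          = L * Real.log r + Real.log 2 := by
        rw [hLdef]; field_simp; ring
      linarith [hC2]
    rw [div_le_iff₀ hlr]
    have : (L + C * (Real.log r)⁻¹) * Real.log r = L * Real.log r + C := by
      field_simp
    linarith [this ▸ hfinal]
end

section
/- Let A, B, C be real numbers with A > 0 and A² − B² − C² = 1 (so that A ≥ 1 and A + B·cos(2θ) + C·sin(2θ) ≥ A − √(A² − 1) > 0 for all θ). Then (1/(2π)) ∫₀^{2π} log(A + B·cos(2θ) + C·sin(2θ)) dθ = log((A + 1)/2). -/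
open Real MeasureTheory Metric Set Complex in
lemma key_log_integral (t : ℝ) (ht0 : 0 ≤ t) (ht1 : t < 1) :
    ∫ θ in (0:ℝ)..(2 * Real.pi),
      Real.log (1 + t ^ 2 + 2 * t * Real.cos θ) = 0 := by
  set f : ℂ → ℂ := fun z => Complex.log (1 + t * z) with hf
  have hslit : ∀ z : ℂ, ‖z‖ ≤ 1 → (1 + t * z) ∈ Complex.slitPlane := by
    intro z hz
    refine Or.inl ?_
    have h1 : |z.re| ≤ 1 := le_trans (Complex.abs_re_le_norm z) hz
    have : (1 + t * z).re = 1 + t * z.re := by simp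
    rw [this]
    nlinarith [abs_le.mp h1]
  have hdiff : DifferentiableOn ℂ f (closedBall (0:ℂ) 1) := by
    intro z hz
    have hz' : ‖z‖ ≤ 1 := by
      simpa [Complex.dist_eq] using mem_closedBall.mp hz
    exact ((Complex.differentiableAt_log (hslit z hz')).comp z
      (by fun_prop : DifferentiableAt ℂ (fun z : ℂ => 1 + (t : ℂ) * z) z)).differentiableWithinAt
  have hd : DiffContOnCl ℂ f (ball (0:ℂ) 1) := by
    apply DifferentiableOn.diffContOnCl
    rwa [closure_ball (0:ℂ) one_ne_zero]
  have hcau := hd.circleIntegral_sub_inv_smul (w := 0) (mem_ball_self one_pos)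
  have hf0 : f 0 = 0 := by simp [hf]
  rw [hf0, smul_zero] at hcau
  -- unfold the circle integral
  have hne : ∀ θ : ℝ, circleMap 0 1 θ ≠ 0 := fun θ => circleMap_ne_center one_ne_zero
  have hunfold : (∮ z in C((0:ℂ), 1), (z - 0)⁻¹ • f z)
      = Complex.I * ∫ θ in (0:ℝ)..(2 * Real.pi), f (circleMap 0 1 θ) := by
    rw [circleIntegral, ← intervalIntegral.integral_const_mul]
    congr 1
    funext θ
    rw [deriv_circleMap]
    have := hne θ
    field_simp [smul_eq_mul]
    rw [smul_eq_mul, smul_eq_mul, sub_zero, one_div, mul_comm (circleMap 0 1 θ) I, mul_assoc,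
      ← mul_assoc (circleMap 0 1 θ), mul_inv_cancel₀ this, one_mul]
  rw [hunfold, mul_eq_zero] at hcau
  have hint : (∫ θ in (0:ℝ)..(2 * Real.pi), f (circleMap 0 1 θ)) = 0 :=
    hcau.resolve_left (by simp [Complex.I_ne_zero])
  -- continuity of the complex integrand
  have hcont : Continuous fun θ : ℝ => f (circleMap 0 1 θ) := by
    apply continuous_iff_continuousAt.mpr
    intro θ
    have h1 : ‖circleMap 0 1 θ‖ ≤ 1 := by
      simp [circleMap, Complex.norm_exp]
    have hadd : ContinuousAt (fun θ : ℝ => 1 + (t : ℂ) * circleMap 0 1 θ) θ := by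
      fun_prop
    exact ContinuousAt.comp (g := Complex.log) (continuousAt_clog (hslit _ h1)) hadd
  -- take real parts
  have hre : (∫ θ in (0:ℝ)..(2 * Real.pi), (f (circleMap 0 1 θ)).re) = 0 := by
    have := Complex.reCLM.intervalIntegral_comp_comm
      (hcont.intervalIntegrable (μ := MeasureTheory.volume) (0:ℝ) (2 * Real.pi))
    simpa [hint] using this
  have habs : ∀ θ : ℝ, ‖1 + t * circleMap 0 1 θ‖ ^ 2
      = 1 + t ^ 2 + 2 * t * Real.cos θ := by
    intro θ
    rw [← Complex.normSq_eq_norm_sq, Complex.normSq_apply]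
    have hre' : (1 + t * circleMap 0 1 θ).re = 1 + t * Real.cos θ := by
      simp [circleMap]
    have him' : (1 + t * circleMap 0 1 θ).im = t * Real.sin θ := by
      simp [circleMap]
    rw [hre', him']
    nlinarith [Real.sin_sq_add_cos_sq θ]
  have hpos : ∀ θ : ℝ, (0:ℝ) < 1 + t ^ 2 + 2 * t * Real.cos θ := by
    intro θ
    nlinarith [Real.neg_one_le_cos θ, Real.cos_le_one θ]
  have heq : ∀ θ : ℝ, Real.log (1 + t ^ 2 + 2 * t * Real.cos θ)
      = 2 * (f (circleMap 0 1 θ)).re := by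
    intro θ
    rw [hf]
    simp only [Complex.log_re]
    rw [← habs θ, Real.log_pow]
    push_cast
    ring
  calc ∫ θ in (0:ℝ)..(2 * Real.pi), Real.log (1 + t ^ 2 + 2 * t * Real.cos θ)
      = ∫ θ in (0:ℝ)..(2 * Real.pi), 2 * (f (circleMap 0 1 θ)).re := by
        simp_rw [heq]
    _ = 2 * ∫ θ in (0:ℝ)..(2 * Real.pi), (f (circleMap 0 1 θ)).re :=
        intervalIntegral.integral_const_mul _ _
    _ = 0 := by rw [hre]; ring


/-- the averaging identity behind equation (4.17) of Breuer: if
`A² - B² - C² = 1` with `A > 0`, then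
`(1/(2π)) ∫₀^{2π} log(A + B cos(2θ) + C sin(2θ)) dθ = log((A+1)/2)`. -/
theorem average_log_of_unimodular_quadratic
    (A B C : ℝ) (hA : 0 < A) (h : A ^ 2 - B ^ 2 - C ^ 2 = 1) :
    (1 / (2 * Real.pi)) *
        ∫ θ in (0 : ℝ)..(2 * Real.pi),
          Real.log (A + B * Real.cos (2 * θ) + C * Real.sin (2 * θ)) =
      Real.log ((A + 1) / 2) := by
  have hpi : (0:ℝ) < 2 * Real.pi := by positivity
  have hA1 : 1 ≤ A := by nlinarith
  set r := Real.sqrt (B ^ 2 + C ^ 2) with hrdef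
  have hr0 : 0 ≤ r := Real.sqrt_nonneg _
  have hr2 : r ^ 2 = B ^ 2 + C ^ 2 := Real.sq_sqrt (by positivity)
  have hA2 : A ^ 2 = 1 + r ^ 2 := by rw [hr2]; linarith
  by_cases hr : r = 0
  · -- degenerate case: B = C = 0, A = 1
    have hB : B = 0 := by nlinarith [hr2, hr]
    have hC : C = 0 := by nlinarith [hr2, hr]
    have hA' : A = 1 := by nlinarith
    simp [hB, hC, hA']
  · have hrpos : 0 < r := lt_of_le_of_ne hr0 (Ne.symm hr)
    set t := r / (A + 1) with htdef
    set c := (A + 1) / 2 with hcdef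
    have hApos : (0:ℝ) < A + 1 := by linarith
    have hcpos : 0 < c := by positivity
    have ht0 : 0 ≤ t := by positivity
    have ht1 : t < 1 := by
      rw [htdef, div_lt_one hApos]
      nlinarith
    -- the phase
    set z : ℂ := ⟨B, C⟩ with hzdef
    have hzne : z ≠ 0 := by
      intro hz
      apply hr
      have : B = 0 ∧ C = 0 := by
        constructor <;> [exact congrArg Complex.re hz; exact congrArg Complex.im hz]
      rw [hrdef, this.1, this.2]; simp
    have habsz : ‖z‖ = r := by
      rw [Complex.norm_def, Complex.normSq_apply, hrdef]
      ring_nf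
      rfl
    set φ := Complex.arg z with hφdef
    have hcos : Real.cos φ = B / r := by
      rw [hφdef, Complex.cos_arg hzne, habsz]
    have hsin : Real.sin φ = C / r := by
      rw [hφdef, Complex.sin_arg, habsz]
    have hB' : B = r * Real.cos φ := by rw [hcos]; field_simp
    have hC' : C = r * Real.sin φ := by rw [hsin]; field_simp
    -- pointwise factorization
    have hfact : ∀ θ : ℝ, A + B * Real.cos (2 * θ) + C * Real.sin (2 * θ)
        = c * (1 + t ^ 2 + 2 * t * Real.cos (2 * θ - φ)) := by
      intro θ
      rw [hB', hC', Real.cos_sub]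
      have h2ct : 2 * c * t = r := by
        rw [hcdef, htdef]; field_simp
      have hct2 : c * (1 + t ^ 2) = A := by
        rw [hcdef, htdef]
        field_simp
        nlinarith
      linear_combination -hct2 - (Real.cos (2 * θ) * Real.cos φ
        + Real.sin (2 * θ) * Real.sin φ) * h2ct
    have hXpos : ∀ u : ℝ, (0:ℝ) < 1 + t ^ 2 + 2 * t * Real.cos u := by
      intro u
      nlinarith [Real.neg_one_le_cos u, Real.cos_le_one u]
    set g : ℝ → ℝ := fun u => Real.log (1 + t ^ 2 + 2 * t * Real.cos u) with hgdef
    have hgcont : Continuous g := by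
      apply Continuous.log (by fun_prop)
      intro u
      exact (hXpos u).ne'
    have hgper : Function.Periodic g (2 * Real.pi) := by
      intro u
      simp only [hgdef, Real.cos_add_two_pi]
    have hgint : ∀ t₁ t₂ : ℝ, IntervalIntegrable g MeasureTheory.volume t₁ t₂ :=
      fun t₁ t₂ => hgcont.intervalIntegrable t₁ t₂
    -- rewrite the integrand
    have hlog : ∀ θ : ℝ, Real.log (A + B * Real.cos (2 * θ) + C * Real.sin (2 * θ))
        = Real.log c + g (2 * θ - φ) := by
      intro θ
      rw [hfact θ, Real.log_mul hcpos.ne' (hXpos _).ne']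
    have hsplit : (∫ θ in (0:ℝ)..(2 * Real.pi),
          Real.log (A + B * Real.cos (2 * θ) + C * Real.sin (2 * θ)))
        = (∫ θ in (0:ℝ)..(2 * Real.pi), Real.log c)
          + ∫ θ in (0:ℝ)..(2 * Real.pi), g (2 * θ - φ) := by
      rw [intervalIntegral.integral_congr
        (g := fun θ => Real.log c + g (2 * θ - φ)) (fun θ _ => hlog θ)]
      exact intervalIntegral.integral_add intervalIntegrable_const
        ((hgcont.comp (by fun_prop : Continuous fun θ : ℝ => 2 * θ - φ)).intervalIntegrable _ _)
    have hsub : (∫ θ in (0:ℝ)..(2 * Real.pi), g (2 * θ - φ))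
        = (2:ℝ)⁻¹ • ∫ u in (2 * (0:ℝ) - φ)..(2 * (2 * Real.pi) - φ), g u :=
      intervalIntegral.integral_comp_mul_sub g two_ne_zero φ
    have hper2 : (∫ u in (2 * (0:ℝ) - φ)..(2 * (2 * Real.pi) - φ), g u)
        = (2:ℤ) • ∫ u in (0:ℝ)..(2 * Real.pi), g u := by
      have h1 : (2 * (2 * Real.pi) - φ) = (2 * (0:ℝ) - φ) + (2:ℤ) • (2 * Real.pi) := by
        rw [zsmul_eq_mul]; push_cast; ring
      rw [h1, hgper.intervalIntegral_add_zsmul_eq 2 _ hgint,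
        hgper.intervalIntegral_add_eq _ 0, zero_add]
    have hkey : (∫ u in (0:ℝ)..(2 * Real.pi), g u) = 0 := key_log_integral t ht0 ht1
    rw [hsplit, hsub, hper2, hkey, intervalIntegral.integral_const]
    simp only [smul_zero, add_zero, smul_eq_mul, sub_zero]
    field_simp
    ring
end

section
/- Let a : ℕ → ℝ with a(j) > 0 for all j ≥ 1 and b : ℕ → ℝ be Jacobi parameters, and fix E ∈ ℝ. If Σ_{j : det(T_j(E)) = 1} ‖T_j(E)‖^{−2} = ∞ (the sum extending over those j ≥ 1 for which the transfer matrix T_j(E) has determinant 1), then every square-summable solution u of the eigenvalue equation at E (with any value of u(0)) is identically zero; in particular, E is not an eigenvalue of the Jacobi matrix J(a,b). -/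
open MeasureTheory Filter
open scoped Classical

/-- The one-step transfer matrix `S_j(E)`. -/
noncomputable def Smat (a b : ℕ → ℝ) (E : ℝ) (j : ℕ) : Matrix (Fin 2) (Fin 2) ℝ :=
  !![(E - b j) / a j, -(a (j - 1)) / a j; 1, 0]

/-- The transfer matrix `T_j(E) = S_j(E) ⋯ S_1(E)` (with `T_0(E) = 1`). -/
noncomputable def Tmat (a b : ℕ → ℝ) (E : ℝ) : ℕ → Matrix (Fin 2) (Fin 2) ℝ
  | 0 => 1
  | (j + 1) => Smat a b E (j + 1) * Tmat a b E j

/-- The operator norm of a real 2×2 matrix. -/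
noncomputable def matOpNorm (M : Matrix (Fin 2) (Fin 2) ℝ) : ℝ :=
  ‖Matrix.toEuclideanCLM (𝕜 := ℝ) M‖

/-- `u` is a solution of the eigenvalue equation
`a(j)u(j+1) + a(j-1)u(j-1) + b(j)u(j) = E u(j)` for all `j ≥ 1`. -/
def IsSolution (a b : ℕ → ℝ) (E : ℝ) (u : ℕ → ℝ) : Prop :=
  ∀ j : ℕ, 1 ≤ j → a j * u (j + 1) + a (j - 1) * u (j - 1) + b j * u j = E * u j

lemma normsq_le (M : Matrix (Fin 2) (Fin 2) ℝ) (v : Fin 2 → ℝ) :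
    (M.mulVec v 0) ^ 2 + (M.mulVec v 1) ^ 2
      ≤ matOpNorm M ^ 2 * ((v 0) ^ 2 + (v 1) ^ 2) := by
  set x : EuclideanSpace ℝ (Fin 2) := (WithLp.equiv 2 _).symm v
  have h := (Matrix.toEuclideanCLM (𝕜 := ℝ) M).le_opNorm x
  have hx : Matrix.toEuclideanCLM (𝕜 := ℝ) M x = (WithLp.equiv 2 _).symm (M.mulVec v) := by
    rfl
  rw [hx] at h
  have e1 : ‖(WithLp.equiv 2 (Fin 2 → ℝ)).symm (M.mulVec v)‖ ^ 2
      = (M.mulVec v 0) ^ 2 + (M.mulVec v 1) ^ 2 := by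
    rw [EuclideanSpace.norm_eq]
    rw [Real.sq_sqrt (by positivity)]
    simp [Fin.sum_univ_two, sq_abs]
  have e2 : ‖x‖ ^ 2 = (v 0) ^ 2 + (v 1) ^ 2 := by
    rw [EuclideanSpace.norm_eq]
    rw [Real.sq_sqrt (by positivity)]
    simp [x, Fin.sum_univ_two, sq_abs]
  have hN : matOpNorm M = ‖Matrix.toEuclideanCLM (𝕜 := ℝ) M‖ := rfl
  rw [hN]
  nlinarith [norm_nonneg x, norm_nonneg (Matrix.toEuclideanCLM (𝕜 := ℝ) M),
    norm_nonneg ((WithLp.equiv 2 (Fin 2 → ℝ)).symm (M.mulVec v))]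

lemma normsq_ge (M : Matrix (Fin 2) (Fin 2) ℝ) (hdet : M.det = 1) (v : Fin 2 → ℝ) :
    (v 0) ^ 2 + (v 1) ^ 2
      ≤ matOpNorm M ^ 2 * ((M.mulVec v 0) ^ 2 + (M.mulVec v 1) ^ 2) := by
  set v' : Fin 2 → ℝ := ![v 1, -v 0] with hv'
  have hdet2 : M 0 0 * M 1 1 - M 0 1 * M 1 0 = 1 := by
    rw [← Matrix.det_fin_two]; exact hdet
  have hw : ∀ w : Fin 2 → ℝ, M.mulVec w 0 = M 0 0 * w 0 + M 0 1 * w 1 ∧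
      M.mulVec w 1 = M 1 0 * w 0 + M 1 1 * w 1 := by
    intro w
    constructor <;> simp [Matrix.mulVec, dotProduct, Fin.sum_univ_two]
  obtain ⟨h0, h1⟩ := hw v
  obtain ⟨h0', h1'⟩ := hw v'
  have hv'0 : v' 0 = v 1 := rfl
  have hv'1 : v' 1 = -v 0 := rfl
  set c := (v 0) ^ 2 + (v 1) ^ 2 with hc
  have key : M.mulVec v 0 * M.mulVec v' 1 - M.mulVec v 1 * M.mulVec v' 0 = -c := by
    rw [h0, h1, h0', h1', hv'0, hv'1, hc]
    nlinarith [hdet2]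
  have cs : c ^ 2 ≤ ((M.mulVec v 0) ^ 2 + (M.mulVec v 1) ^ 2)
      * ((M.mulVec v' 0) ^ 2 + (M.mulVec v' 1) ^ 2) := by
    nlinarith [sq_nonneg (M.mulVec v 0 * M.mulVec v' 0 + M.mulVec v 1 * M.mulVec v' 1), key]
  have hb := normsq_le M v'
  have hceq : (v' 0) ^ 2 + (v' 1) ^ 2 = c := by rw [hv'0, hv'1, hc]; ring
  rw [hceq] at hb
  have hc0 : 0 ≤ c := by positivity
  rcases eq_or_lt_of_le hc0 with h | h
  · rw [← h]; positivity
  · nlinarith [sq_nonneg (matOpNorm M), sq_nonneg (M.mulVec v 0), sq_nonneg (M.mulVec v 1),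
      sq_nonneg (M.mulVec v' 0), sq_nonneg (M.mulVec v' 1)]

lemma Tmat_mulVec (a b : ℕ → ℝ) (hapos : ∀ j, 1 ≤ j → 0 < a j) (E : ℝ) (u : ℕ → ℝ)
    (hsol : IsSolution a b E u) :
    ∀ j, (Tmat a b E j).mulVec ![u 1, u 0] = ![u (j + 1), u j] := by
  intro j
  induction j with
  | zero => simp [Tmat]
  | succ j ih =>
    rw [Tmat, ← Matrix.mulVec_mulVec, ih]
    have ha := (hapos (j + 1) (by omega)).ne'
    have hs := hsol (j + 1) (by omega)
    simp only [Nat.add_sub_cancel] at hs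
    funext i
    fin_cases i
    · show (Smat a b E (j + 1)).mulVec ![u (j + 1), u j] 0 = u (j + 2)
      simp [Smat, Matrix.mulVec, dotProduct, Fin.sum_univ_two]
      field_simp
      linarith
    · show (Smat a b E (j + 1)).mulVec ![u (j + 1), u j] 1 = u (j + 1)
      simp [Smat, Matrix.mulVec, dotProduct, Fin.sum_univ_two]

/-- Proposition B.6 of Breuer, after Simon–Stolz: if
`Σ_{j : det T_j(E) = 1} ‖T_j(E)‖⁻² = ∞`, then every square-summable solution of the
eigenvalue equation at `E` vanishes identically; in particular `E` is not an eigenvalue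
of `J(a,b)`. -/
theorem no_square_summable_solution_of_divergent_transfer_sum
    (a b : ℕ → ℝ) (ha0 : a 0 = 1) (hapos : ∀ j, 1 ≤ j → 0 < a j)
    (E : ℝ)
    (hdiv : ¬ Summable fun j : ℕ =>
      if (Tmat a b E (j + 1)).det = 1 then 1 / matOpNorm (Tmat a b E (j + 1)) ^ 2 else 0) :
    ∀ u : ℕ → ℝ, IsSolution a b E u → (Summable fun j : ℕ => u (j + 1) ^ 2) →
      ∀ j, u j = 0 := by
  intro u hsol hsum
  have hT := Tmat_mulVec a b hapos E u hsol
  set c := (u 1) ^ 2 + (u 0) ^ 2 with hc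
  have hc0 : 0 ≤ c := by positivity
  have hczero : c = 0 := by
    by_contra hcne
    have hcpos : 0 < c := lt_of_le_of_ne hc0 (Ne.symm hcne)
    apply hdiv
    have hsum2 : Summable (fun j : ℕ => u (j + 2) ^ 2) :=
      (summable_nat_add_iff 1).2 hsum
    have hg : Summable (fun j : ℕ => (1 / c) * (u (j + 2) ^ 2 + u (j + 1) ^ 2)) :=
      ((hsum2.add hsum).mul_left _)
    apply Summable.of_nonneg_of_le _ _ hg
    · intro j
      split
      · positivity
      · exact le_rfl
    · intro j
      split
      · rename_i hdet
        have hkey := normsq_ge (Tmat a b E (j + 1)) hdet ![u 1, u 0]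
        rw [hT (j + 1)] at hkey
        have hv0 : (![u 1, u 0] : Fin 2 → ℝ) 0 = u 1 := rfl
        have hv1 : (![u 1, u 0] : Fin 2 → ℝ) 1 = u 0 := rfl
        have hw0 : (![u (j + 2), u (j + 1)] : Fin 2 → ℝ) 0 = u (j + 2) := rfl
        have hw1 : (![u (j + 2), u (j + 1)] : Fin 2 → ℝ) 1 = u (j + 1) := rfl
        rw [hv0, hv1, hw0, hw1] at hkey
        -- hkey : c ≤ matOpNorm T ^ 2 * (u (j+2)^2 + u (j+1)^2)
        set N := matOpNorm (Tmat a b E (j + 1)) with hN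
        have hNnn : 0 ≤ N := norm_nonneg _
        have hN2pos : 0 < N ^ 2 := by
          rcases eq_or_lt_of_le hNnn with h | h
          · exfalso; rw [← h] at hkey; simp at hkey; linarith
          · positivity
        have e : (1:ℝ) / c * (u (j + 2) ^ 2 + u (j + 1) ^ 2)
            = (u (j + 2) ^ 2 + u (j + 1) ^ 2) / c := by ring
        rw [e, div_le_div_iff₀ hN2pos hcpos]
        nlinarith [hkey, hc]
      · positivity
  rw [hc] at hczero
  have h1 : u 1 = 0 := by nlinarith [sq_nonneg (u 1), sq_nonneg (u 0)]
  have h0 : u 0 = 0 := by nlinarith [sq_nonneg (u 1), sq_nonneg (u 0)]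
  have hall : ∀ j, u j = 0 ∧ u (j + 1) = 0 := by
    intro j
    induction j with
    | zero => exact ⟨h0, h1⟩
    | succ j ih =>
      refine ⟨ih.2, ?_⟩
      have hs := hsol (j + 1) (by omega)
      simp only [Nat.add_sub_cancel] at hs
      rw [ih.1, ih.2] at hs
      have ha := (hapos (j + 1) (by omega)).ne'
      have : a (j + 1) * u (j + 2) = 0 := by linarith
      exact (mul_eq_zero.1 this).resolve_left ha
  exact fun j => (hall j).1
end
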